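/- Let A ⊆ ℝ^d be a closed set such that: (i) there exists L > 0 such that A is the image of an injective arc-length parametrization γ : I → ℝ^d of class C^{1,1} with parameter L, where I ⊆ ℝ is a closed interval; and (ii) for every ε > 0 there is δ > 0 with: x, y ∈ A and |x − y| < δ imply d_A(x, y) < ε, where d_A is the intrinsic (geodesic) distance in A. Then reach A ≥ min{δ₀/2, 1/(8L)}, where δ₀ is a δ corresponding to ε = 1/(2L) in (ii). -/

import Mathlib

open Metric Set Filter
open scoped ENNReal RealInnerProductSpace Topology NNReal

noncomputable section

variable {E : Type*} [NormedAddCommGroup E] [InnerProductSpace ℝ E]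

/-- `x` has a unique nearest point in `A`. -/
def UnpPt (A : Set E) (x : E) : Prop :=
  ∃! a, a ∈ A ∧ dist x a = Metric.infDist x A

/-- The reach of `A` at a point `a` (Federer). -/
def locReach (A : Set E) (a : E) : ℝ≥0∞ :=
  ⨆ (r : ℝ≥0) (_ : ∀ x : E, dist x a < (r : ℝ) → UnpPt A x), (r : ℝ≥0∞)

/-- The (global) reach of `A`. -/
def setReach (A : Set E) : ℝ≥0∞ := ⨅ a ∈ A, locReach A a

/-- The tangent cone of `A` at `a` in the sense of Federer. -/
def Tan (A : Set E) (a : E) : Set E :=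
  {u | u = 0 ∨ ∃ (x : ℕ → E) (r : ℕ → ℝ),
    (∀ i, x i ∈ A ∧ x i ≠ a ∧ 0 < r i) ∧
    Tendsto x atTop (nhds a) ∧
    Tendsto (fun i => r i • (x i - a)) atTop (nhds u)}

/-- The normal cone of `A` at `a`: the dual cone of the tangent cone. -/
def Nor (A : Set E) (a : E) : Set E :=
  {u | ∀ v ∈ Tan A a, ⟪u, v⟫ ≤ 0}
namespace Stmt16Aux

variable {d : ℕ} {A : Set (EuclideanSpace ℝ (Fin d))} {I : Set ℝ}
  {γ γ' : ℝ → EuclideanSpace ℝ (Fin d)} {L : ℝ}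

lemma curve_cont (hderiv : ∀ t ∈ I, HasDerivWithinAt γ (γ' t) I t) :
    ContinuousOn γ I := fun u hu => (hderiv u hu).continuousWithinAt

lemma curve_lip (hIint : I.OrdConnected)
    (hderiv : ∀ t ∈ I, HasDerivWithinAt γ (γ' t) I t)
    (hnorm : ∀ t ∈ I, ‖γ' t‖ = 1) :
    ∀ u ∈ I, ∀ v ∈ I, ‖γ v - γ u‖ ≤ |v - u| := by
  intro u hu v hv
  have h := Convex.norm_image_sub_le_of_norm_hasDerivWithin_le hderiv
    (fun x hx => le_of_eq (hnorm x hx)) (convex_iff_ordConnected.mpr hIint) hu hv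
  simpa [Real.norm_eq_abs] using h

lemma curve_taylor (hIint : I.OrdConnected) (hL : 0 < L)
    (hderiv : ∀ t ∈ I, HasDerivWithinAt γ (γ' t) I t)
    (hlip : LipschitzOnWith (Real.toNNReal L) γ' I) :
    ∀ u ∈ I, ∀ v ∈ I, u ≤ v → ‖γ v - γ u - (v - u) • γ' u‖ ≤ L * (v - u) ^ 2 := by
  intro u hu v hv huv
  have hIcc : Icc u v ⊆ I := hIint.out hu hv
  set f : ℝ → EuclideanSpace ℝ (Fin d) := fun w => γ w - w • γ' u with hf
  have hfd : ∀ x ∈ Icc u v, HasDerivWithinAt f (γ' x - γ' u) (Icc u v) x := by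
    intro x hx
    have h1 : HasDerivWithinAt (fun w : ℝ => w • γ' u) ((1:ℝ) • γ' u) (Icc u v) x :=
      ((hasDerivAt_id x).smul_const (γ' u)).hasDerivWithinAt
    have h2 := ((hderiv x (hIcc hx)).mono hIcc).sub h1
    rw [one_smul] at h2
    exact h2
  have hbound : ∀ x ∈ Icc u v, ‖γ' x - γ' u‖ ≤ L * (v - u) := by
    intro x hx
    have h := hlip.dist_le_mul x (hIcc hx) u hu
    rw [Real.coe_toNNReal L hL.le] at h
    rw [← dist_eq_norm]
    refine h.trans ?_
    have : dist x u ≤ v - u := by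
      rw [Real.dist_eq, abs_of_nonneg (by linarith [hx.1] : (0:ℝ) ≤ x - u)]
      linarith [hx.2]
    nlinarith
  have h := Convex.norm_image_sub_le_of_norm_hasDerivWithin_le hfd hbound
    (convex_Icc u v) (left_mem_Icc.mpr huv) (right_mem_Icc.mpr huv)
  have hfv : f v - f u = γ v - γ u - (v - u) • γ' u := by
    simp only [hf, sub_smul]; abel
  rw [hfv] at h
  refine h.trans ?_
  rw [Real.norm_eq_abs, abs_of_nonneg (by linarith : (0:ℝ) ≤ v - u)]
  nlinarith

lemma curve_inner_deriv (hL : 0 < L)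
    (hnorm : ∀ t ∈ I, ‖γ' t‖ = 1)
    (hlip : LipschitzOnWith (Real.toNNReal L) γ' I) :
    ∀ u ∈ I, ∀ v ∈ I, 1 - L ^ 2 * (v - u) ^ 2 / 2 ≤ ⟪γ' u, γ' v⟫ := by
  intro u hu v hv
  have h := hlip.dist_le_mul v hv u hu
  rw [Real.coe_toNNReal L hL.le, Real.dist_eq, dist_eq_norm] at h
  have hsq := norm_sub_sq_real (γ' v) (γ' u)
  rw [hnorm v hv, hnorm u hu] at hsq
  have h2 : ‖γ' v - γ' u‖ ^ 2 ≤ L ^ 2 * (v - u) ^ 2 := by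
    have h3 : ‖γ' v - γ' u‖ ≤ L * |v - u| := h
    have h4 : (L * |v - u|) ^ 2 = L ^ 2 * (v - u) ^ 2 := by
      rw [mul_pow, sq_abs]
    nlinarith [norm_nonneg (γ' v - γ' u)]
  have hcomm : ⟪γ' v, γ' u⟫ = ⟪γ' u, γ' v⟫ := real_inner_comm _ _
  nlinarith

lemma curve_chord (hIint : I.OrdConnected) (hL : 0 < L)
    (hderiv : ∀ t ∈ I, HasDerivWithinAt γ (γ' t) I t)
    (hnorm : ∀ t ∈ I, ‖γ' t‖ = 1)
    (hlip : LipschitzOnWith (Real.toNNReal L) γ' I) :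
    ∀ u ∈ I, ∀ v ∈ I, u ≤ v →
      (v - u) - L ^ 2 * (v - u) ^ 3 / 6 ≤ ‖γ v - γ u‖ := by
  intro u hu v hv huv
  rcases eq_or_lt_of_le huv with rfl | hlt
  · simp
  have hIcc : Icc u v ⊆ I := hIint.out hu hv
  set f : ℝ → ℝ := fun w => ⟪γ' u, γ w⟫ - (w - u) + L ^ 2 / 6 * (w - u) ^ 3 with hfdef
  have hder : ∀ x ∈ Ioo u v,
      HasDerivAt f (⟪γ' u, γ' x⟫ - 1 + L ^ 2 / 6 * (3 * (x - u) ^ 2)) x := by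
    intro x hx
    have hxI : I ∈ 𝓝 x := by
      refine mem_nhds_iff.mpr ⟨Ioo u v, (Ioo_subset_Icc_self).trans hIcc, isOpen_Ioo, hx⟩
    have hγx : HasDerivAt γ (γ' x) x :=
      (hderiv x (hIcc (Ioo_subset_Icc_self hx))).hasDerivAt hxI
    have h1 : HasDerivAt (fun w : ℝ => ⟪γ' u, γ w⟫) (⟪γ' u, γ' x⟫) x := by
      have := HasDerivAt.inner ℝ (hasDerivAt_const x (γ' u)) hγx
      simpa using this
    have h2 : HasDerivAt (fun w : ℝ => w - u) 1 x := (hasDerivAt_id x).sub_const u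
    have h3 : HasDerivAt (fun w : ℝ => L ^ 2 / 6 * (w - u) ^ 3)
        (L ^ 2 / 6 * (3 * (x - u) ^ 2 * 1)) x := by
      exact (h2.pow 3).const_mul (L ^ 2 / 6) |>.congr_deriv (by ring) |>.congr_deriv rfl
    have := (h1.sub h2).add h3
    have h4 := this.congr_deriv (show ⟪γ' u, γ' x⟫ - 1 + L ^ 2 / 6 * (3 * (x - u) ^ 2 * 1) =
      ⟪γ' u, γ' x⟫ - 1 + L ^ 2 / 6 * (3 * (x - u) ^ 2) by ring)
    exact h4
  have hmono : MonotoneOn f (Icc u v) := by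
    refine monotoneOn_of_deriv_nonneg (convex_Icc u v) ?_ ?_ ?_
    · have hγc : ContinuousOn γ (Icc u v) := (curve_cont hderiv).mono hIcc
      exact ((continuousOn_const.inner hγc).sub
        ((continuousOn_id.sub continuousOn_const))).add
        (continuousOn_const.mul (((continuousOn_id.sub continuousOn_const)).pow 3))
    · intro x hx
      rw [interior_Icc] at hx
      exact (hder x hx).differentiableAt.differentiableWithinAt
    · intro x hx
      rw [interior_Icc] at hx
      rw [(hder x hx).deriv]
      have := curve_inner_deriv hL hnorm hlip u hu x (hIcc (Ioo_subset_Icc_self hx))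
      nlinarith
  have hfu : f u ≤ f v := hmono (left_mem_Icc.mpr huv) (right_mem_Icc.mpr huv) huv
  have hexp : ⟪γ' u, γ v - γ u⟫ = ⟪γ' u, γ v⟫ - ⟪γ' u, γ u⟫ := inner_sub_right _ _ _
  have hCS : ⟪γ' u, γ v - γ u⟫ ≤ ‖γ v - γ u‖ := by
    have := real_inner_le_norm (γ' u) (γ v - γ u)
    rwa [hnorm u hu, one_mul] at this
  simp only [hfdef] at hfu
  nlinarith [hfu, hCS, hexp]

lemma curve_chord' (hIint : I.OrdConnected) (hL : 0 < L)
    (hderiv : ∀ t ∈ I, HasDerivWithinAt γ (γ' t) I t)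
    (hnorm : ∀ t ∈ I, ‖γ' t‖ = 1)
    (hlip : LipschitzOnWith (Real.toNNReal L) γ' I) :
    ∀ u ∈ I, ∀ v ∈ I, |v - u| ≤ 3 / (5 * L) →
      47 / 50 * |v - u| ≤ ‖γ v - γ u‖ := by
  intro u hu v hv habs
  rcases le_total u v with h | h
  · have hc := curve_chord hIint hL hderiv hnorm hlip u hu v hv h
    rw [abs_of_nonneg (by linarith : (0:ℝ) ≤ v - u)] at habs ⊢
    have hd0 : (0:ℝ) ≤ v - u := by linarith
    have hLvu : L * (v - u) ≤ 3 / 5 := by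
      rw [le_div_iff₀ (by positivity : (0:ℝ) < 5 * L)] at habs
      nlinarith
    have h9 : (L * (v - u)) ^ 2 ≤ 9 / 25 := by nlinarith [mul_nonneg hL.le hd0]
    have h10 : L ^ 2 * (v - u) ^ 3 / 6 ≤ 3 / 50 * (v - u) := by
      nlinarith [mul_le_mul_of_nonneg_left h9 hd0]
    linarith
  · have hc := curve_chord hIint hL hderiv hnorm hlip v hv u hu h
    rw [abs_of_nonpos (by linarith : v - u ≤ 0)] at habs ⊢
    rw [← norm_neg]
    have : -(γ v - γ u) = γ u - γ v := by abel
    rw [this]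
    have hd0 : (0:ℝ) ≤ u - v := by linarith
    have hLvu : L * (u - v) ≤ 3 / 5 := by
      rw [le_div_iff₀ (by positivity : (0:ℝ) < 5 * L)] at habs
      nlinarith
    have h9 : (L * (u - v)) ^ 2 ≤ 9 / 25 := by nlinarith [mul_nonneg hL.le hd0]
    have h10 : L ^ 2 * (u - v) ^ 3 / 6 ≤ 3 / 50 * (u - v) := by
      nlinarith [mul_le_mul_of_nonneg_left h9 hd0]
    linarith

/-- A point of the ambient space accumulated by curve points with unbounded parameters. -/
def BadPt (I : Set ℝ) {d : ℕ} (γ : ℝ → EuclideanSpace ℝ (Fin d))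
    (y : EuclideanSpace ℝ (Fin d)) : Prop :=
  ∃ v : ℕ → ℝ, (∀ n, v n ∈ I) ∧ Tendsto (fun n => |v n|) atTop atTop ∧
    Tendsto (fun n => γ (v n)) atTop (𝓝 y)

lemma isClosed_badSet (hA : IsClosed A) (hγc : ContinuousOn γ I) :
    IsClosed {y : EuclideanSpace ℝ (Fin d) | y ∈ A ∧ BadPt I γ y} := by
  rw [← isSeqClosed_iff_isClosed]
  intro ys y hys hlim
  constructor
  · exact hA.mem_of_tendsto hlim (Eventually.of_forall fun n => (hys n).1)
  · -- diagonal extraction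
    have hsel : ∀ n : ℕ, ∃ w : ℝ, w ∈ I ∧ (n : ℝ) ≤ |w| ∧ dist (γ w) (ys n) < 1 / (n + 1) := by
      intro n
      obtain ⟨v, hvI, hvt, hvγ⟩ := (hys n).2
      have h1 : ∀ᶠ k in atTop, (n : ℝ) ≤ |v k| := hvt.eventually_ge_atTop _
      have h2 : ∀ᶠ k in atTop, dist (γ (v k)) (ys n) < 1 / (n + 1) := by
        obtain ⟨N, hN⟩ := Metric.tendsto_atTop.mp hvγ (1 / (n + 1)) (by positivity)
        exact eventually_atTop.mpr ⟨N, fun k hk => hN k hk⟩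
      obtain ⟨k, hk1, hk2⟩ := (h1.and h2).exists
      exact ⟨v k, hvI k, hk1, hk2⟩
    choose w hwI hwge hwd using hsel
    refine ⟨w, hwI, ?_, ?_⟩
    · exact tendsto_atTop_mono hwge tendsto_natCast_atTop_atTop
    · rw [tendsto_iff_dist_tendsto_zero]
      have hb : ∀ n, dist (γ (w n)) y ≤ 1 / (n + 1) + dist (ys n) y := by
        intro n
        calc dist (γ (w n)) y ≤ dist (γ (w n)) (ys n) + dist (ys n) y := dist_triangle _ _ _
        _ ≤ 1 / (n + 1) + dist (ys n) y := by linarith [hwd n]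
      refine squeeze_zero (fun n => dist_nonneg) hb ?_
      have h1 : Tendsto (fun n : ℕ => 1 / ((n : ℝ) + 1)) atTop (𝓝 0) :=
        tendsto_one_div_add_atTop_nhds_zero_nat
      have h2 : Tendsto (fun n => dist (ys n) y) atTop (𝓝 0) :=
        tendsto_iff_dist_tendsto_zero.mp hlim
      simpa using h1.add h2

lemma lift_lemma (hIint : I.OrdConnected) (hIcl : IsClosed I) (hL : 0 < L)
    (hinj : InjOn γ I) (himg : γ '' I = A)
    (hderiv : ∀ t ∈ I, HasDerivWithinAt γ (γ' t) I t)
    (hnorm : ∀ t ∈ I, ‖γ' t‖ = 1)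
    (hlip : LipschitzOnWith (Real.toNNReal L) γ' I)
    {s t : ℝ} (hs : s ∈ I) (ht : t ∈ I)
    {g : ℝ → EuclideanSpace ℝ (Fin d)} (hg : ContinuousOn g (Icc 0 1))
    (hg0 : g 0 = γ s) (hg1 : g 1 = γ t) (him : g '' Icc 0 1 ⊆ A)
    (hvar : eVariationOn g (Icc 0 1) < ENNReal.ofReal (1 / (2 * L))) :
    |t - s| ≤ 3 / (5 * L) ∨
      ∃ τ ∈ Icc (0:ℝ) 1, ∃ u ∈ I, γ u = g τ ∧ |u - t| ≤ 3 / (5 * L) ∧ BadPt I γ (g τ) := by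
  have hγc : ContinuousOn γ I := curve_cont hderiv
  set W : ℝ := 3 / (5 * L) with hWdef
  have hW : 0 < W := by positivity
  have hW' : 25 / (47 * L) < W := by
    rw [hWdef, div_lt_div_iff₀ (by positivity) (by positivity)]
    nlinarith
  have hdist : ∀ τ ∈ Icc (0:ℝ) 1, dist (g τ) (γ t) < 1 / (2 * L) := by
    intro τ hτ
    have h := eVariationOn.edist_le g hτ (right_mem_Icc.mpr zero_le_one)
    have h2 := lt_of_le_of_lt h hvar
    rw [edist_lt_ofReal] at h2
    rwa [hg1] at h2
  have hpar : ∀ τ ∈ Icc (0:ℝ) 1, ∃ u, u ∈ I ∧ γ u = g τ := by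
    intro τ hτ
    have h : g τ ∈ A := him (mem_image_of_mem g hτ)
    rw [← himg] at h
    obtain ⟨u, huI, hu⟩ := h
    exact ⟨u, huI, hu⟩
  set S : Set ℝ :=
    {τ' | τ' ∈ Icc (0:ℝ) 1 ∧ ∀ τ ∈ Icc τ' 1, ∃ u, u ∈ I ∧ γ u = g τ ∧ |u - t| ≤ W}
    with hSdef
  have h1S : (1:ℝ) ∈ S := by
    refine ⟨right_mem_Icc.mpr zero_le_one, fun τ hτ => ?_⟩
    have hτ1 : τ = 1 := le_antisymm hτ.2 hτ.1
    subst hτ1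
    exact ⟨t, ht, hg1.symm, by simpa using hW.le⟩
  have hSne : S.Nonempty := ⟨1, h1S⟩
  have hSbdd : BddBelow S := ⟨0, fun τ hτ => hτ.1.1⟩
  set τs : ℝ := sInf S with hτsdef
  have hτs0 : 0 ≤ τs := le_csInf hSne fun τ hτ => hτ.1.1
  have hτs1 : τs ≤ 1 := csInf_le hSbdd h1S
  have hτsIcc : τs ∈ Icc (0:ℝ) 1 := ⟨hτs0, hτs1⟩
  have hPgt : ∀ τ, τs < τ → τ ≤ 1 → ∃ u, u ∈ I ∧ γ u = g τ ∧ |u - t| ≤ W := by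
    intro τ hlt h1
    obtain ⟨τ', hτ'S, hτ'lt⟩ := exists_lt_of_csInf_lt hSne hlt
    exact hτ'S.2 τ ⟨hτ'lt.le, h1⟩
  have himprove : ∀ u, u ∈ I → γ u = g τs → |u - t| ≤ W → |u - t| ≤ 25 / (47 * L) := by
    intro u huI hγu hub
    have hc := curve_chord' hIint hL hderiv hnorm hlip t ht u huI hub
    have hd : ‖γ u - γ t‖ < 1 / (2 * L) := by
      rw [← dist_eq_norm, hγu]
      exact hdist τs hτsIcc
    have habs : 0 ≤ |u - t| := abs_nonneg _
    rw [le_div_iff₀ (by positivity : (0:ℝ) < 47 * L)]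
    have h3 : 47 / 50 * |u - t| < 1 / (2 * L) := lt_of_le_of_lt hc hd
    have h4 : 47 / 50 * |u - t| * (2 * L) < 1 / (2 * L) * (2 * L) :=
      mul_lt_mul_of_pos_right h3 (by positivity)
    have h5 : 1 / (2 * L) * (2 * L) = 1 := by field_simp
    nlinarith
  have hstep2 : ∃ u, u ∈ I ∧ γ u = g τs ∧ |u - t| ≤ 25 / (47 * L) := by
    rcases eq_or_lt_of_le hτs1 with heq | hlt1
    · refine ⟨t, ht, by rw [heq, hg1], by simp; positivity⟩
    · set τn : ℕ → ℝ := fun n => τs + (1 - τs) * (1 / (n + 1)) with hτndef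
      have hτnmem : ∀ n : ℕ, τs < τn n ∧ τn n ≤ 1 := by
        intro n
        have h1 : (0:ℝ) < 1 / ((n:ℝ) + 1) := by positivity
        have h2 : (1:ℝ) / ((n:ℝ) + 1) ≤ 1 := by
          rw [div_le_one (by positivity)]
          simp
        constructor
        · have : (0:ℝ) < (1 - τs) * (1 / (n + 1)) := by
            apply mul_pos (by linarith) h1
          simp only [hτndef]
          linarith
        · simp only [hτndef]
          nlinarith
      have hτnt : Tendsto τn atTop (𝓝 τs) := by
        have h0 : Tendsto (fun n : ℕ => (1 - τs) * (1 / ((n:ℝ) + 1))) atTop (𝓝 0) := by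
          simpa using tendsto_one_div_add_atTop_nhds_zero_nat.const_mul (1 - τs)
        have h1 : Tendsto (fun n : ℕ => τs + (1 - τs) * (1 / ((n:ℝ) + 1))) atTop
            (𝓝 (τs + 0)) := tendsto_const_nhds.add h0
        rw [add_zero] at h1
        exact h1
      choose un hunI hunγ hunb using fun n => hPgt (τn n) (hτnmem n).1 (hτnmem n).2
      have hKc : IsCompact (Icc (t - W) (t + W) ∩ I) :=
        isCompact_Icc.of_isClosed_subset (isClosed_Icc.inter hIcl) inter_subset_left
      have hunK : ∀ n, un n ∈ Icc (t - W) (t + W) ∩ I := by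
        intro n
        have h := abs_le.mp (hunb n)
        exact ⟨⟨by linarith [h.1], by linarith [h.2]⟩, hunI n⟩
      obtain ⟨us, husK, φ, hφ, hφt⟩ := hKc.tendsto_subseq hunK
      have husI : us ∈ I := husK.2
      have hγus : γ us = g τs := by
        have hseqI : Tendsto (fun n => un (φ n)) atTop (𝓝[I] us) := by
          refine tendsto_nhdsWithin_of_tendsto_nhds_of_eventually_within _ hφt ?_
          exact Eventually.of_forall fun n => hunI (φ n)
        have h1 : Tendsto (fun n => γ (un (φ n))) atTop (𝓝 (γ us)) :=
          (hγc us husI).tendsto.comp hseqI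
        have hseqτ : Tendsto (fun n => τn (φ n)) atTop (𝓝[Icc (0:ℝ) 1] τs) := by
          refine tendsto_nhdsWithin_of_tendsto_nhds_of_eventually_within _
            (hτnt.comp hφ.tendsto_atTop) ?_
          exact Eventually.of_forall fun n =>
            ⟨le_trans hτs0 (hτnmem (φ n)).1.le, (hτnmem (φ n)).2⟩
        have h2 : Tendsto (fun n => g (τn (φ n))) atTop (𝓝 (g τs)) :=
          (hg τs hτsIcc).tendsto.comp hseqτ
        have heqf : (fun n => γ (un (φ n))) = fun n => g (τn (φ n)) :=
          funext fun n => hunγ (φ n)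
        rw [heqf] at h1
        exact tendsto_nhds_unique h1 h2
      have husb : |us - t| ≤ W := by
        have h := husK.1
        rw [mem_Icc] at h
        rw [abs_le]
        constructor <;> linarith [h.1, h.2]
      exact ⟨us, husI, hγus, himprove us husI hγus husb⟩
  rcases eq_or_lt_of_le hτs0 with heq0 | hpos
  · -- τs = 0 : the whole path is in the window, left disjunct
    left
    obtain ⟨u0, hu0I, hγu0, hu0b⟩ := hstep2
    have hu0s : u0 = s := by
      apply hinj hu0I hs
      rw [hγu0, ← heq0, hg0]
    rw [abs_sub_comm, ← hu0s]
    linarith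
  · -- τs > 0 : there is a jump
    obtain ⟨us, husI, hγus, husb⟩ := hstep2
    have hfail : ∀ n : ℕ, ∃ τt, (τt ∈ Icc (0:ℝ) 1 ∧ τs - 1 / (n + 1) ≤ τt ∧ τt < τs) ∧
        ∀ u, u ∈ I → γ u = g τt → W < |u - t| := by
      intro n
      set τb := max 0 (τs - 1 / (n + 1)) with hτbdef
      have h1n : (0:ℝ) < 1 / ((n:ℝ) + 1) := by positivity
      have hτblt : τb < τs := max_lt hpos (by linarith)
      have hτbmem : τb ∈ Icc (0:ℝ) 1 := ⟨le_max_left _ _, max_le (by linarith) (by linarith)⟩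
      have hτbS : τb ∉ S := notMem_of_lt_csInf (hτsdef ▸ hτblt) hSbdd
      have hne : ¬ ∀ τ ∈ Icc τb 1, ∃ u, u ∈ I ∧ γ u = g τ ∧ |u - t| ≤ W :=
        fun hcon => hτbS ⟨hτbmem, hcon⟩
      push_neg at hne
      obtain ⟨τt, hτtmem, hτtfail⟩ := hne
      have hτtIcc : τt ∈ Icc (0:ℝ) 1 := ⟨le_trans hτbmem.1 hτtmem.1, hτtmem.2⟩
      have hτtlt : τt < τs := by
        by_contra hge
        push_neg at hge
        rcases eq_or_lt_of_le hge with heq | hlt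
        · obtain ⟨hI2, hγ2, hb2⟩ := And.intro husI (And.intro hγus husb)
          have : γ us = g τt := by rw [hγ2, heq]
          exact absurd (le_trans hb2 hW'.le) (not_le.mpr (hτtfail us husI this))
        · obtain ⟨u, huI, huγ, hub⟩ := hPgt τt hlt hτtIcc.2
          exact absurd hub (not_le.mpr (hτtfail u huI huγ))
      refine ⟨τt, ⟨hτtIcc, le_trans (le_max_right _ _) hτtmem.1, hτtlt⟩, hτtfail⟩
    choose τt hτtp hτtfar using hfail
    have hτtt : Tendsto τt atTop (𝓝 τs) := by
      have hlow : Tendsto (fun n : ℕ => τs - 1 / ((n:ℝ) + 1)) atTop (𝓝 τs) := by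
        simpa using (tendsto_const_nhds : Tendsto (fun _ : ℕ => τs) atTop (𝓝 τs)).sub tendsto_one_div_add_atTop_nhds_zero_nat
      exact tendsto_of_tendsto_of_tendsto_of_le_of_le hlow tendsto_const_nhds
        (fun n => (hτtp n).2.1) (fun n => (hτtp n).2.2.le)
    choose un hunI hunγ using fun n => hpar (τt n) (hτtp n).1
    have hunfar : ∀ n, W < |un n - t| := fun n => hτtfar n (un n) (hunI n) (hunγ n)
    have hgτt : Tendsto (fun n => g (τt n)) atTop (𝓝 (g τs)) := by
      have hseqτ : Tendsto τt atTop (𝓝[Icc (0:ℝ) 1] τs) :=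
        tendsto_nhdsWithin_of_tendsto_nhds_of_eventually_within _ hτtt
          (Eventually.of_forall fun n => (hτtp n).1)
      exact (hg τs hτsIcc).tendsto.comp hseqτ
    by_cases hbb : Tendsto (fun n => |un n|) atTop atTop
    · right
      refine ⟨τs, hτsIcc, us, husI, hγus, by linarith, ?_⟩
      refine ⟨un, hunI, hbb, ?_⟩
      have heqf : (fun n => γ (un n)) = fun n => g (τt n) := funext fun n => hunγ n
      rw [heqf]
      exact hgτt
    · exfalso
      obtain ⟨M, hM⟩ : ∃ M : ℝ, ∃ᶠ n in atTop, |un n| < M := by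
        by_contra hcon
        push_neg at hcon
        apply hbb
        rw [Filter.tendsto_atTop]
        intro b
        have := hcon b
        exact this
      obtain ⟨φ, hφmono, hφlt⟩ := extraction_of_frequently_atTop hM
      have hK'c : IsCompact (Icc (-M) M ∩ I) :=
        isCompact_Icc.of_isClosed_subset (isClosed_Icc.inter hIcl) inter_subset_left
      have hmemK' : ∀ n, un (φ n) ∈ Icc (-M) M ∩ I := by
        intro n
        have h := abs_lt.mp (hφlt n)
        exact ⟨⟨h.1.le, h.2.le⟩, hunI (φ n)⟩
      obtain ⟨uoo, huooK, ψ, hψ, hψt⟩ := hK'c.tendsto_subseq hmemK'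
      have huooI : uoo ∈ I := huooK.2
      have hγuoo : γ uoo = g τs := by
        have hseqI : Tendsto (fun n => un (φ (ψ n))) atTop (𝓝[I] uoo) :=
          tendsto_nhdsWithin_of_tendsto_nhds_of_eventually_within _ hψt
            (Eventually.of_forall fun n => hunI (φ (ψ n)))
        have h1 : Tendsto (fun n => γ (un (φ (ψ n)))) atTop (𝓝 (γ uoo)) :=
          (hγc uoo huooI).tendsto.comp hseqI
        have h2 : Tendsto (fun n => g (τt (φ (ψ n)))) atTop (𝓝 (g τs)) :=
          hgτt.comp (hφmono.tendsto_atTop.comp hψ.tendsto_atTop)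
        have heqf : (fun n => γ (un (φ (ψ n)))) = fun n => g (τt (φ (ψ n))) :=
          funext fun n => hunγ (φ (ψ n))
        rw [heqf] at h1
        exact tendsto_nhds_unique h1 h2
      have huoous : uoo = us := hinj huooI husI (by rw [hγuoo, hγus])
      have hWle : W ≤ |uoo - t| := by
        have htendabs : Tendsto (fun n => |un (φ (ψ n)) - t|) atTop (𝓝 |uoo - t|) :=
          ((hψt.sub tendsto_const_nhds).abs)
        exact ge_of_tendsto htendabs (Eventually.of_forall fun n => (hunfar (φ (ψ n))).le)
      rw [huoous] at hWle
      linarith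

lemma no_bad (hA : IsClosed A) (hIint : I.OrdConnected) (hIcl : IsClosed I) (hL : 0 < L)
    (hinj : InjOn γ I) (himg : γ '' I = A)
    (hderiv : ∀ t ∈ I, HasDerivWithinAt γ (γ' t) I t)
    (hnorm : ∀ t ∈ I, ‖γ' t‖ = 1)
    (hlip : LipschitzOnWith (Real.toNNReal L) γ' I)
    (hii : ∀ ε > (0:ℝ), ∃ δ > (0:ℝ), ∀ x ∈ A, ∀ y ∈ A, dist x y < δ →
      ∃ g : ℝ → EuclideanSpace ℝ (Fin d), ContinuousOn g (Icc 0 1) ∧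
        g 0 = x ∧ g 1 = y ∧ g '' Icc 0 1 ⊆ A ∧
        eVariationOn g (Icc 0 1) < ENNReal.ofReal ε) :
    ∀ y ∈ A, ¬ BadPt I γ y := by
  intro y₀ hy₀A hbad₀
  have hγc : ContinuousOn γ I := curve_cont hderiv
  set F : Set (EuclideanSpace ℝ (Fin d)) := {y | y ∈ A ∧ BadPt I γ y} with hFdef
  have hFcl : IsClosed F := isClosed_badSet hA hγc
  haveI : Nonempty F := ⟨⟨y₀, hy₀A, hbad₀⟩⟩
  haveI := hFcl.completeSpace_coe
  -- Baire category on F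
  set C : ℕ → Set F := fun n =>
    {z : F | (z : EuclideanSpace ℝ (Fin d)) ∈ γ '' (I ∩ Icc (-(n:ℝ)) (n:ℝ))} with hCdef
  have hCcl : ∀ n, IsClosed (C n) := by
    intro n
    have hKc : IsCompact (I ∩ Icc (-(n:ℝ)) (n:ℝ)) :=
      isCompact_Icc.of_isClosed_subset (hIcl.inter isClosed_Icc) inter_subset_right
    have : IsCompact (γ '' (I ∩ Icc (-(n:ℝ)) (n:ℝ))) :=
      hKc.image_of_continuousOn (hγc.mono inter_subset_left)
    exact this.isClosed.preimage continuous_subtype_val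
  have hCun : ⋃ n, C n = univ := by
    ext z
    simp only [mem_iUnion, mem_univ, iff_true, hCdef, mem_setOf_eq]
    have hzA : (z : EuclideanSpace ℝ (Fin d)) ∈ A := z.2.1
    rw [← himg] at hzA
    obtain ⟨u, huI, hu⟩ := hzA
    refine ⟨⌈|u|⌉₊, u, ⟨huI, ?_⟩, hu⟩
    have := Nat.le_ceil |u|
    rw [mem_Icc]
    constructor
    · have := abs_le.mp (le_refl |u|)
      nlinarith [abs_nonneg u, neg_abs_le u, Nat.le_ceil |u|]
    · linarith [le_abs_self u, Nat.le_ceil |u|]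
  obtain ⟨n₀, hn₀⟩ := nonempty_interior_of_iUnion_of_closed hCcl hCun
  obtain ⟨z₀', hz₀'⟩ := hn₀
  obtain ⟨σ, hσpos, hball⟩ := Metric.isOpen_iff.mp isOpen_interior z₀' hz₀'
  set z₀ : EuclideanSpace ℝ (Fin d) := (z₀' : EuclideanSpace ℝ (Fin d)) with hz₀def
  have hz₀F : z₀ ∈ F := z₀'.2
  have hzone : ∀ y' : EuclideanSpace ℝ (Fin d), y' ∈ F → dist y' z₀ < σ →
      y' ∈ γ '' (I ∩ Icc (-(n₀:ℝ)) (n₀:ℝ)) := by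
    intro y' hy'F hy'd
    have hmem : (⟨y', hy'F⟩ : F) ∈ Metric.ball z₀' σ := by
      rw [Metric.mem_ball, Subtype.dist_eq]
      exact hy'd
    exact (interior_subset (hball hmem) : (⟨y', hy'F⟩ : F) ∈ C n₀)
  -- z₀ itself has a bounded parameter
  obtain ⟨u₀, hu₀mem, hγu₀⟩ := hzone z₀ hz₀F (by simpa using hσpos)
  -- witnesses of badness at z₀
  obtain ⟨v, hvI, hvt, hvγ⟩ := hz₀F.2
  set ε : ℝ := min (σ / 2) (1 / (2 * L)) with hεdef
  have hεpos : 0 < ε := lt_min (by linarith) (by positivity)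
  obtain ⟨δ, hδpos, hδ⟩ := hii ε hεpos
  -- pick a far witness close to z₀
  have hev1 : ∀ᶠ j in atTop, (n₀ : ℝ) + 1 / L ≤ |v j| := hvt.eventually_ge_atTop _
  have hev2 : ∀ᶠ j in atTop, dist (γ (v j)) z₀ < δ := by
    obtain ⟨N, hN⟩ := Metric.tendsto_atTop.mp hvγ δ hδpos
    exact eventually_atTop.mpr ⟨N, fun k hk => hN k hk⟩
  obtain ⟨j, hj1, hj2⟩ := (hev1.and hev2).exists
  -- connect z₀ to the far witness by a short path
  have hvjA : γ (v j) ∈ A := himg ▸ mem_image_of_mem γ (hvI j)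
  obtain ⟨R, hRc, hR0, hR1, hRim, hRvar⟩ :=
    hδ z₀ hz₀F.1 (γ (v j)) hvjA (by rwa [dist_comm] at hj2)
  have hRvar' : eVariationOn R (Icc 0 1) < ENNReal.ofReal (1 / (2 * L)) :=
    lt_of_lt_of_le hRvar (ENNReal.ofReal_le_ofReal (min_le_right _ _))
  have hR0' : R 0 = γ u₀ := by rw [hR0, ← hγu₀]
  have hlift := lift_lemma hIint hIcl hL hinj himg hderiv hnorm hlip
    hu₀mem.1 (hvI j) hRc hR0' hR1 hRim hRvar'
  have hu₀n : |u₀| ≤ (n₀ : ℝ) := by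
    rw [abs_le]
    exact ⟨(mem_Icc.mp hu₀mem.2).1, (mem_Icc.mp hu₀mem.2).2⟩
  have h35 : 3 / (5 * L) < 1 / L := by
    rw [div_lt_div_iff₀ (by positivity) hL]
    nlinarith
  rcases hlift with hclose | ⟨τ, hτIcc, u', hu'I, hγu', hu'b, hbadτ⟩
  · -- the endpoints cannot be parameter-close
    have : |v j| - |u₀| ≤ |v j - u₀| := by
      have := abs_sub_abs_le_abs_sub (v j) u₀
      linarith
    linarith
  · -- the jump point is a bad point near z₀ with a large parameter : contradiction
    have hy'A : R τ ∈ A := hRim (mem_image_of_mem R hτIcc)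
    have hy'd : dist (R τ) z₀ < σ := by
      have h := eVariationOn.edist_le R hτIcc (left_mem_Icc.mpr zero_le_one)
      have h2 := lt_of_le_of_lt h hRvar
      rw [edist_lt_ofReal] at h2
      rw [hR0] at h2
      exact lt_of_lt_of_le h2 (le_trans (min_le_left _ _) (by linarith))
    have hy'F : R τ ∈ F := ⟨hy'A, hbadτ⟩
    obtain ⟨u'', hu''mem, hγu''⟩ := hzone (R τ) hy'F hy'd
    have hu''u' : u'' = u' := hinj hu''mem.1 hu'I (by rw [hγu'', hγu'])
    have hu''n : |u''| ≤ (n₀ : ℝ) := by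
      rw [abs_le]
      exact ⟨(mem_Icc.mp hu''mem.2).1, (mem_Icc.mp hu''mem.2).2⟩
    have hlarge : |v j| - |u' - v j| ≤ |u'| := by
      have h1 := abs_sub_abs_le_abs_sub (v j) u'
      rw [abs_sub_comm] at h1
      linarith
    rw [hu''u'] at hu''n
    linarith

lemma main_lift (hA : IsClosed A) (hIint : I.OrdConnected) (hIcl : IsClosed I) (hL : 0 < L)
    (hinj : InjOn γ I) (himg : γ '' I = A)
    (hderiv : ∀ t ∈ I, HasDerivWithinAt γ (γ' t) I t)
    (hnorm : ∀ t ∈ I, ‖γ' t‖ = 1)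
    (hlip : LipschitzOnWith (Real.toNNReal L) γ' I)
    (hii : ∀ ε > (0:ℝ), ∃ δ > (0:ℝ), ∀ x ∈ A, ∀ y ∈ A, dist x y < δ →
      ∃ g : ℝ → EuclideanSpace ℝ (Fin d), ContinuousOn g (Icc 0 1) ∧
        g 0 = x ∧ g 1 = y ∧ g '' Icc 0 1 ⊆ A ∧
        eVariationOn g (Icc 0 1) < ENNReal.ofReal ε)
    {s t : ℝ} (hs : s ∈ I) (ht : t ∈ I)
    {g : ℝ → EuclideanSpace ℝ (Fin d)} (hg : ContinuousOn g (Icc 0 1))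
    (hg0 : g 0 = γ s) (hg1 : g 1 = γ t) (him : g '' Icc 0 1 ⊆ A)
    (hvar : eVariationOn g (Icc 0 1) < ENNReal.ofReal (1 / (2 * L))) :
    |t - s| ≤ 3 / (5 * L) := by
  rcases lift_lemma hIint hIcl hL hinj himg hderiv hnorm hlip hs ht hg hg0 hg1 him hvar with
    h | ⟨τ, hτ, u, huI, hγu, _, hbad⟩
  · exact h
  · exact absurd hbad
      (no_bad hA hIint hIcl hL hinj himg hderiv hnorm hlip hii (g τ)
        (him (mem_image_of_mem g hτ)))

set_option maxHeartbeats 1000000 in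
lemma final_contr (hIint : I.OrdConnected) (hL : 0 < L) (himg : γ '' I = A)
    (hderiv : ∀ t ∈ I, HasDerivWithinAt γ (γ' t) I t)
    (hnorm : ∀ t ∈ I, ‖γ' t‖ = 1)
    (hlip : LipschitzOnWith (Real.toNNReal L) γ' I)
    {s t : ℝ} (hs : s ∈ I) (ht : t ∈ I) (hst : s < t) (hts : t - s ≤ 3 / (5 * L))
    {x : EuclideanSpace ℝ (Fin d)}
    (hnear : ∀ y ∈ A, dist x (γ s) ≤ dist x y)
    (heq : dist x (γ s) = dist x (γ t))
    (hm : dist x (γ s) < 1 / (8 * L)) : False := by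
  have hm0 : (0:ℝ) ≤ ‖x - γ s‖ := norm_nonneg _
  rw [dist_eq_norm, dist_eq_norm] at heq
  rw [dist_eq_norm] at hm
  have key1 : ∀ y ∈ A, ⟪x - γ s, y - γ s⟫ ≤ ‖y - γ s‖ ^ 2 / 2 := by
    intro y hy
    have h := hnear y hy
    rw [dist_eq_norm, dist_eq_norm] at h
    have hsq : ‖x - γ s‖ ^ 2 ≤ ‖x - y‖ ^ 2 := pow_le_pow_left₀ (norm_nonneg _) h 2
    have hid : x - y = (x - γ s) - (y - γ s) := by abel
    have hexp2 : ‖(x - γ s) - (y - γ s)‖ ^ 2 =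
        ‖x - γ s‖ ^ 2 - 2 * ⟪x - γ s, y - γ s⟫ + ‖y - γ s‖ ^ 2 := norm_sub_sq_real _ _
    rw [hid, hexp2] at hsq
    linarith
  have hmemIcc : ∀ u, s ≤ u → u ≤ t → u ∈ I := fun u h1 h2 => hIint.out hs ht ⟨h1, h2⟩
  have key2 : ⟪x - γ s, γ' s⟫ ≤ 0 := by
    by_contra hposc
    push_neg at hposc
    set c' : ℝ := ⟪x - γ s, γ' s⟫ with hc'def
    have hden : (0:ℝ) < 1 + 2 * ‖x - γ s‖ * L := by positivity
    set u : ℝ := min t (s + c' / (1 + 2 * ‖x - γ s‖ * L)) with hudef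
    have hsu : s < u := lt_min hst (by linarith [div_pos hposc hden])
    have hut : u ≤ t := min_le_left _ _
    have huI : u ∈ I := hmemIcc u hsu.le hut
    have hyA : γ u ∈ A := himg ▸ mem_image_of_mem γ huI
    have h1 := key1 (γ u) hyA
    have hlipb : ‖γ u - γ s‖ ≤ u - s := by
      have h := curve_lip hIint hderiv hnorm s hs u huI
      rwa [abs_of_nonneg (by linarith : (0:ℝ) ≤ u - s)] at h
    have htay : ‖γ u - γ s - (u - s) • γ' s‖ ≤ L * (u - s) ^ 2 :=
      curve_taylor hIint hL hderiv hlip s hs u huI hsu.le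
    set e := γ u - γ s - (u - s) • γ' s with hedef
    have hexp : ⟪x - γ s, γ u - γ s⟫ = (u - s) * c' + ⟪x - γ s, e⟫ := by
      have hsplit : γ u - γ s = (u - s) • γ' s + e := by rw [hedef]; abel
      rw [hsplit, inner_add_right, real_inner_smul_right]
    have hinner_e : -(‖x - γ s‖ * (L * (u - s) ^ 2)) ≤ ⟪x - γ s, e⟫ := by
      have h := abs_real_inner_le_norm (x - γ s) e
      have h2 : ‖x - γ s‖ * ‖e‖ ≤ ‖x - γ s‖ * (L * (u - s) ^ 2) :=
        mul_le_mul_of_nonneg_left htay hm0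
      nlinarith [neg_abs_le ⟪x - γ s, e⟫]
    have hq : ‖γ u - γ s‖ ^ 2 ≤ (u - s) ^ 2 := by nlinarith [norm_nonneg (γ u - γ s)]
    have hcomb : (u - s) * c' ≤ (u - s) ^ 2 / 2 + ‖x - γ s‖ * (L * (u - s) ^ 2) := by
      nlinarith [h1, hexp, hinner_e, hq]
    have husp : (0:ℝ) < u - s := by linarith
    have hc'le : c' ≤ (u - s) * (1 / 2 + ‖x - γ s‖ * L) := by
      refine (mul_le_mul_iff_right₀ husp).mp ?_
      nlinarith [hcomb]
    have hub : u - s ≤ c' / (1 + 2 * ‖x - γ s‖ * L) := by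
      have h := min_le_right t (s + c' / (1 + 2 * ‖x - γ s‖ * L))
      rw [← hudef] at h
      linarith
    have hub' : (u - s) * (1 + 2 * ‖x - γ s‖ * L) ≤ c' := (le_div_iff₀ hden).mp hub
    have hmL0 : (0:ℝ) ≤ ‖x - γ s‖ * L := mul_nonneg hm0 hL.le
    have hchain : (u - s) * (1 + 2 * ‖x - γ s‖ * L) ≤ (u - s) * (1 / 2 + ‖x - γ s‖ * L) :=
      hub'.trans hc'le
    have hred : 1 + 2 * ‖x - γ s‖ * L ≤ 1 / 2 + ‖x - γ s‖ * L :=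
      (mul_le_mul_iff_right₀ husp).mp hchain
    linarith
  -- final quantitative contradiction
  have hΔ : (0:ℝ) < t - s := by linarith
  have hcb : 47 / 50 * (t - s) ≤ ‖γ t - γ s‖ := by
    have h := curve_chord' hIint hL hderiv hnorm hlip s hs t ht
      (by rw [abs_of_pos hΔ]; exact hts)
    rwa [abs_of_pos hΔ] at h
  have key3 : ⟪x - γ s, γ t - γ s⟫ = ‖γ t - γ s‖ ^ 2 / 2 := by
    have hsq : ‖x - γ s‖ ^ 2 = ‖x - γ t‖ ^ 2 := by rw [heq]
    have hid : x - γ t = (x - γ s) - (γ t - γ s) := by abel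
    have hexp2 : ‖(x - γ s) - (γ t - γ s)‖ ^ 2 =
        ‖x - γ s‖ ^ 2 - 2 * ⟪x - γ s, γ t - γ s⟫ + ‖γ t - γ s‖ ^ 2 := norm_sub_sq_real _ _
    rw [hid, hexp2] at hsq
    linarith
  have htay : ‖γ t - γ s - (t - s) • γ' s‖ ≤ L * (t - s) ^ 2 :=
    curve_taylor hIint hL hderiv hlip s hs t ht hst.le
  have hupper : ⟪x - γ s, γ t - γ s⟫ ≤ ‖x - γ s‖ * (L * (t - s) ^ 2) := by
    set e := γ t - γ s - (t - s) • γ' s with hedef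
    have hsplit : γ t - γ s = (t - s) • γ' s + e := by rw [hedef]; abel
    have hexp : ⟪x - γ s, γ t - γ s⟫ = (t - s) * ⟪x - γ s, γ' s⟫ + ⟪x - γ s, e⟫ := by
      rw [hsplit, inner_add_right, real_inner_smul_right]
    have h1 : (t - s) * ⟪x - γ s, γ' s⟫ ≤ 0 := mul_nonpos_of_nonneg_of_nonpos hΔ.le key2
    have h2 : ⟪x - γ s, e⟫ ≤ ‖x - γ s‖ * (L * (t - s) ^ 2) := by
      have h := real_inner_le_norm (x - γ s) e
      have h3 : ‖x - γ s‖ * ‖e‖ ≤ ‖x - γ s‖ * (L * (t - s) ^ 2) :=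
        mul_le_mul_of_nonneg_left htay hm0
      linarith
    linarith [hexp, h1, h2]
  have hsq2 : (47 / 50 * (t - s)) ^ 2 ≤ ‖γ t - γ s‖ ^ 2 :=
    pow_le_pow_left₀ (by positivity) hcb 2
  have hfin : (47 / 50 : ℝ) ^ 2 * (t - s) ^ 2 / 2 ≤ ‖x - γ s‖ * (L * (t - s) ^ 2) := by
    rw [mul_pow] at hsq2
    linarith [key3, hupper]
  have hmLlt : ‖x - γ s‖ * L < 1 / 8 := by
    have h := mul_lt_mul_of_pos_right hm hL
    have h2 : 1 / (8 * L) * L = 1 / 8 := by field_simp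
    rw [h2] at h
    exact h
  have hlast := mul_lt_mul_of_pos_right hmLlt (mul_pos hΔ hΔ)
  nlinarith [hlast, hfin]

end Stmt16Aux

/-- A closed simple C^{1,1} curve (image of an injective arc-length parametrization with
L-Lipschitz derivative) whose intrinsic distance is uniformly controlled by the Euclidean
distance has reach at least min(δ₀/2, 1/(8L)). -/
theorem stmt16 {d : ℕ} (A : Set (EuclideanSpace ℝ (Fin d))) (hA : IsClosed A)
    (I : Set ℝ) (hIint : I.OrdConnected) (hIcl : IsClosed I)
    (γ γ' : ℝ → EuclideanSpace ℝ (Fin d)) (L : ℝ) (hL : 0 < L)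
    (hinj : InjOn γ I) (himg : γ '' I = A)
    (hderiv : ∀ t ∈ I, HasDerivWithinAt γ (γ' t) I t)
    (hnorm : ∀ t ∈ I, ‖γ' t‖ = 1)
    (hlipγ' : LipschitzOnWith (Real.toNNReal L) γ' I)
    (hii : ∀ ε > (0:ℝ), ∃ δ > (0:ℝ), ∀ x ∈ A, ∀ y ∈ A, dist x y < δ →
      ∃ g : ℝ → EuclideanSpace ℝ (Fin d), ContinuousOn g (Icc 0 1) ∧
        g 0 = x ∧ g 1 = y ∧ g '' Icc 0 1 ⊆ A ∧
        eVariationOn g (Icc 0 1) < ENNReal.ofReal ε)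
    (δ₀ : ℝ) (hδ₀ : 0 < δ₀)
    (hδ₀prop : ∀ x ∈ A, ∀ y ∈ A, dist x y < δ₀ →
      ∃ g : ℝ → EuclideanSpace ℝ (Fin d), ContinuousOn g (Icc 0 1) ∧
        g 0 = x ∧ g 1 = y ∧ g '' Icc 0 1 ⊆ A ∧
        eVariationOn g (Icc 0 1) < ENNReal.ofReal (1 / (2 * L))) :
    ENNReal.ofReal (min (δ₀ / 2) (1 / (8 * L))) ≤ setReach A := by
  classical
  set r : ℝ := min (δ₀ / 2) (1 / (8 * L)) with hrdef
  have hr : 0 < r := lt_min (by linarith) (by positivity)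
  unfold setReach locReach
  refine le_iInf₂ fun a ha => ?_
  have key : ∀ x : EuclideanSpace ℝ (Fin d), dist x a < r → UnpPt A x := by
    intro x hx
    have hAne : A.Nonempty := ⟨a, ha⟩
    obtain ⟨b, hbA, hbd⟩ := hA.exists_infDist_eq_dist hAne x
    refine ⟨b, ⟨hbA, hbd.symm⟩, ?_⟩
    rintro c ⟨hcA, hcd⟩
    have hmle : infDist x A < r := lt_of_le_of_lt (infDist_le_dist_of_mem ha) hx
    have hdb : dist x b < r := by rw [← hbd]; exact hmle
    have hdc : dist x c < r := by rw [hcd]; exact hmle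
    have hbc : dist b c < δ₀ := by
      have h := dist_triangle b x c
      have h1 : dist b x = dist x b := dist_comm _ _
      have hrδ : r ≤ δ₀ / 2 := min_le_left _ _
      linarith
    obtain ⟨sb, hsI, hγs⟩ : ∃ sb, sb ∈ I ∧ γ sb = b := by
      rw [← himg] at hbA
      obtain ⟨sb, h1, h2⟩ := hbA
      exact ⟨sb, h1, h2⟩
    obtain ⟨tc, htI, hγt⟩ : ∃ tc, tc ∈ I ∧ γ tc = c := by
      rw [← himg] at hcA
      obtain ⟨tc, h1, h2⟩ := hcA
      exact ⟨tc, h1, h2⟩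
    obtain ⟨g, hgc, hg0, hg1, him, hvar⟩ := hδ₀prop b hbA c hcA hbc
    have hg0' : g 0 = γ sb := by rw [hg0, hγs]
    have hg1' : g 1 = γ tc := by rw [hg1, hγt]
    have hlift := Stmt16Aux.main_lift hA hIint hIcl hL hinj himg hderiv hnorm hlipγ' hii
      hsI htI hgc hg0' hg1' him hvar
    have hr8 : r ≤ 1 / (8 * L) := min_le_right _ _
    have hnearb : ∀ y ∈ A, dist x b ≤ dist x y := by
      intro y hy; rw [← hbd]; exact infDist_le_dist_of_mem hy
    have hnearc : ∀ y ∈ A, dist x c ≤ dist x y := by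
      intro y hy; rw [hcd]; exact infDist_le_dist_of_mem hy
    have heqbc : dist x b = dist x c := by rw [← hbd, hcd]
    rcases lt_trichotomy sb tc with hlt | heqst | hgt
    · exfalso
      refine Stmt16Aux.final_contr (x := x) hIint hL himg hderiv hnorm hlipγ' hsI htI hlt ?_ ?_ ?_ ?_
      · rw [abs_of_pos (sub_pos.mpr hlt)] at hlift; exact hlift
      · intro y hy; rw [hγs]; exact hnearb y hy
      · rw [hγs, hγt]; exact heqbc
      · rw [hγs]; exact lt_of_lt_of_le hdb hr8
    · rw [← hγs, ← hγt, heqst]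
    · exfalso
      refine Stmt16Aux.final_contr (x := x) hIint hL himg hderiv hnorm hlipγ' htI hsI hgt ?_ ?_ ?_ ?_
      · rw [abs_sub_comm, abs_of_pos (sub_pos.mpr hgt)] at hlift; exact hlift
      · intro y hy; rw [hγt]; exact hnearc y hy
      · rw [hγs, hγt]; exact heqbc.symm
      · rw [hγt]; exact lt_of_lt_of_le hdc hr8
  have hnn : ((Real.toNNReal r : ℝ≥0) : ℝ) = r := Real.coe_toNNReal r hr.le
  have key' : ∀ x : EuclideanSpace ℝ (Fin d), dist x a < ((Real.toNNReal r : ℝ≥0) : ℝ) →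
      UnpPt A x := by
    rw [hnn]; exact key
  have hle := le_iSup₂ (f := fun (ρ : ℝ≥0)
    (_ : ∀ x : EuclideanSpace ℝ (Fin d), dist x a < (ρ:ℝ) → UnpPt A x) => (ρ : ℝ≥0∞))
    (Real.toNNReal r) key'
  simpa [ENNReal.ofReal] using hle
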